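/- arXiv:1406.1481 — 4 statements merged into one kernel-verified Lean document; each statement's English description precedes it below -/
import Mathlib

section
/- For 0 < C < 1, the image of the closed disk {z ∈ ℂ : |z| ≤ C} under the map z ↦ log(z - 1), where log is the branch of the logarithm with imaginary part in [0, 2π), is a convex subset of ℂ. -/
open Complex

/-- The branch of the complex logarithm with imaginary part in `[0, 2π)`. -/
noncomputable def log2pi (z : ℂ) : ℂ :=
  if 0 ≤ Complex.arg z then Complex.log z else Complex.log z + 2 * Real.pi * Complex.I

open Real Set

private lemma cos_convexOn : ConvexOn ℝ (Icc (π/2) (3*π/2)) Real.cos := by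
  refine ⟨convex_Icc _ _, ?_⟩
  intro x hx y hy a b ha hb hab
  have hx' : x - π/2 ∈ Icc (0:ℝ) π := ⟨by linarith [hx.1], by linarith [hx.2]⟩
  have hy' : y - π/2 ∈ Icc (0:ℝ) π := ⟨by linarith [hy.1], by linarith [hy.2]⟩
  have h := strictConcaveOn_sin_Icc.concaveOn.2 hx' hy' ha hb hab
  have e1 : ∀ t : ℝ, Real.sin (t - π/2) = -Real.cos t := by
    intro t; rw [Real.sin_sub]; simp
  have e2 : a • (x - π/2) + b • (y - π/2) = (a • x + b • y) - π/2 := by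
    simp only [smul_eq_mul]; linear_combination (-(π/2)) * hab
  rw [e2, e1, e1, e1] at h
  simp only [smul_eq_mul] at h ⊢
  linarith

private lemma abs_cond (C : ℝ) (hC0 : 0 < C) (u : ℂ) :
    ‖Complex.exp u + 1‖ ≤ C ↔
      Real.exp u.re + 2 * Real.cos u.im + (1 - C^2) * Real.exp (-u.re) ≤ 0 := by
  have h1 : ‖Complex.exp u + 1‖ ^ 2
      = Real.exp u.re ^ 2 + 2 * Real.exp u.re * Real.cos u.im + 1 := by
    rw [Complex.sq_norm, Complex.normSq_apply]
    simp only [Complex.add_re, Complex.add_im, Complex.one_re, Complex.one_im,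
      Complex.exp_re, Complex.exp_im]
    nlinarith [Real.sin_sq_add_cos_sq u.im]
  have hexp : Real.exp u.re * Real.exp (-u.re) = 1 := by
    rw [← Real.exp_add]; simp
  have habs : 0 ≤ ‖Complex.exp u + 1‖ := norm_nonneg _
  have hepos : 0 < Real.exp u.re := Real.exp_pos _
  have henpos : 0 < Real.exp (-u.re) := Real.exp_pos _
  constructor
  · intro h
    have h2 : ‖Complex.exp u + 1‖ ^ 2 ≤ C ^ 2 := by nlinarith
    nlinarith
  · intro h
    have h2 : ‖Complex.exp u + 1‖ ^ 2 ≤ C ^ 2 := by nlinarith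
    nlinarith

theorem convex_log_image_of_disk (C : ℝ) (hC0 : 0 < C) (hC1 : C < 1) :
    Convex ℝ ((fun z : ℂ => log2pi (z - 1)) '' {z : ℂ | ‖z‖ ≤ C}) := by
  have hpi := Real.pi_pos
  set S : Set ℂ := {u : ℂ | u.im ∈ Icc (π/2) (3*π/2) ∧
      Real.exp u.re + 2 * Real.cos u.im + (1 - C^2) * Real.exp (-u.re) ≤ 0} with hS
  have himg : (fun z : ℂ => log2pi (z - 1)) '' {z : ℂ | ‖z‖ ≤ C} = S := by
    ext u
    constructor
    · rintro ⟨z, hz, rfl⟩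
      simp only [mem_setOf_eq] at hz
      have hw : z - 1 ≠ 0 := by
        intro h
        rw [sub_eq_zero] at h
        rw [h] at hz
        simp at hz
        linarith
      have hre : (z - 1).re < 0 := by
        have := Complex.re_le_norm z
        simp only [Complex.sub_re, Complex.one_re]
        linarith
      have hcos : Real.cos (Complex.arg (z - 1)) < 0 := by
        rw [Complex.cos_arg hw]
        exact div_neg_of_neg_of_pos hre (norm_pos_iff.mpr hw)
      have harg1 : Complex.arg (z - 1) ≤ π := Complex.arg_le_pi _
      have harg2 : -π < Complex.arg (z - 1) := Complex.neg_pi_lt_arg _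
      have habsarg : π/2 < |Complex.arg (z - 1)| := by
        by_contra h
        push_neg at h
        rw [abs_le] at h
        have := Real.cos_nonneg_of_mem_Icc ⟨h.1, h.2⟩
        linarith
      have hexplog : Complex.exp (Complex.log (z - 1)) = z - 1 := Complex.exp_log hw
      simp only [log2pi]
      split_ifs with hargsgn
      · -- arg ≥ 0, so arg ∈ (π/2, π]
        have hgt : π/2 < Complex.arg (z - 1) := by
          rwa [_root_.abs_of_nonneg hargsgn] at habsarg
        constructor
        · rw [Complex.log_im]
          exact ⟨hgt.le, by linarith⟩
        · rw [← abs_cond C hC0]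
          rw [hexplog]
          simpa using hz
      · -- arg < 0, so arg ∈ (-π, -π/2)
        push_neg at hargsgn
        have hlt : Complex.arg (z - 1) < -(π/2) := by
          rw [_root_.abs_of_neg hargsgn] at habsarg
          linarith
        have him : (Complex.log (z - 1) + 2 * ↑π * Complex.I).im
            = Complex.arg (z - 1) + 2 * π := by
          simp [Complex.log_im]
        have hre' : (Complex.log (z - 1) + 2 * ↑π * Complex.I).re
            = (Complex.log (z - 1)).re := by simp
        constructor
        · rw [him]
          constructor <;> linarith
        · rw [← abs_cond C hC0]
          rw [Complex.exp_add, hexplog]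
          have : Complex.exp (2 * ↑π * Complex.I) = 1 := Complex.exp_two_pi_mul_I
          rw [this, mul_one]
          simpa using hz
    · rintro ⟨him, hF⟩
      refine ⟨Complex.exp u + 1, ?_, ?_⟩
      · simp only [mem_setOf_eq]
        exact (abs_cond C hC0 u).mpr hF
      · simp only [add_sub_cancel_right]
        -- show log2pi (exp u) = u
        rcases le_or_gt u.im π with hle | hgt
        · have hlog : Complex.log (Complex.exp u) = u :=
            Complex.log_exp (by linarith [him.1]) hle
          have harg : Complex.arg (Complex.exp u) = u.im := by
            rw [← Complex.log_im, hlog]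
          simp only [log2pi, harg]
          rw [if_pos (by linarith [him.1])]
          exact hlog
        · have hval : Complex.exp u = Complex.exp (u - 2 * ↑π * Complex.I) := by
            rw [Complex.exp_sub, Complex.exp_two_pi_mul_I, div_one]
          have him' : (u - 2 * ↑π * Complex.I).im = u.im - 2 * π := by simp
          have hlog : Complex.log (Complex.exp u) = u - 2 * ↑π * Complex.I := by
            rw [hval]
            exact Complex.log_exp (by rw [him']; linarith)
              (by rw [him']; linarith [him.2])
          have harg : Complex.arg (Complex.exp u) = u.im - 2 * π := by
            rw [← Complex.log_im, hlog, him']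
          simp only [log2pi, harg]
          rw [if_neg (by intro h; linarith [him.2])]
          rw [hlog]
          ring
  rw [himg]
  intro u hu v hv a b ha hb hab
  have hexp1 := convexOn_exp.2 (mem_univ u.re) (mem_univ v.re) ha hb hab
  have hexp2 := convexOn_exp.2 (mem_univ (-u.re)) (mem_univ (-v.re)) ha hb hab
  have hcos := cos_convexOn.2 hu.1 hv.1 ha hb hab
  have hC2 : 0 < 1 - C^2 := by nlinarith
  have hre : (a • u + b • v).re = a * u.re + b * v.re := by
    simp [Complex.add_re, Complex.smul_re]
  have himm : (a • u + b • v).im = a * u.im + b * v.im := by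
    simp [Complex.add_im, Complex.smul_im]
  constructor
  · rw [himm]
    exact (convex_Icc (π/2) (3*π/2)) hu.1 hv.1 ha hb hab
  · rw [hre, himm]
    simp only [smul_eq_mul] at hexp1 hexp2 hcos
    have h1 := hu.2
    have h2 := hv.2
    have hn : -(a * u.re + b * v.re) = a * (-u.re) + b * (-v.re) := by ring
    rw [hn]
    nlinarith [mul_le_mul_of_nonneg_left h1 ha, mul_le_mul_of_nonneg_left h2 hb]
end

section
/- Let 0 < C < 1 and set A = 1 - C² > 0. Define ψ(x) implicitly by cos ψ(x) = (e^x + A e^{-x})/2 for x in the range where this right-hand side lies in [cos(π/2), 1], with ψ(x) ∈ [0, π/2). Then ψ is concave on this interval; equivalently, ψ satisfies -ψ'' sin ψ = (1 + (ψ')²) cos ψ, which forces ψ'' ≤ 0. -/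
theorem psi_concave (C : ℝ) (hC0 : 0 < C) (hC1 : C < 1) (ψ : ℝ → ℝ)
    (hψ : ∀ x ∈ Set.Icc (Real.log (1 - C)) (Real.log (1 + C)),
      Real.cos (ψ x) = (Real.exp x + (1 - C ^ 2) * Real.exp (-x)) / 2 ∧
      ψ x ∈ Set.Ico 0 (Real.pi / 2)) :
    ConcaveOn ℝ (Set.Icc (Real.log (1 - C)) (Real.log (1 + C))) ψ := by
  set A : ℝ := 1 - C ^ 2 with hA
  have hA0 : 0 < A := by nlinarith
  set f : ℝ → ℝ := fun y => (Real.exp y + A * Real.exp (-y)) / 2 with hfdef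
  set fd : ℝ → ℝ := fun y => (Real.exp y - A * Real.exp (-y)) / 2 with hfddef
  set F : ℝ → ℝ := fun y => Real.arccos (f y) with hFdef
  set a := Real.log (1 - C)
  set b := Real.log (1 + C)
  -- derivatives of f and fd
  have hf : ∀ x : ℝ, HasDerivAt f (fd x) x := by
    intro x
    have hen : HasDerivAt (fun y : ℝ => Real.exp (-y)) (-Real.exp (-x)) x := by
      simpa [Function.comp_def] using (Real.hasDerivAt_exp (-x)).comp x (hasDerivAt_neg x)
    have := ((Real.hasDerivAt_exp x).add (hen.const_mul A)).div_const 2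
    refine this.congr_deriv ?_
    simp only [hfddef]
    ring
  have hfd : ∀ x : ℝ, HasDerivAt fd (f x) x := by
    intro x
    have hen : HasDerivAt (fun y : ℝ => Real.exp (-y)) (-Real.exp (-x)) x := by
      simpa [Function.comp_def] using (Real.hasDerivAt_exp (-x)).comp x (hasDerivAt_neg x)
    have := ((Real.hasDerivAt_exp x).sub (hen.const_mul A)).div_const 2
    refine this.congr_deriv ?_
    simp only [hfdef]
    ring
  -- basic facts on the interior
  have hfacts : ∀ x ∈ Set.Ioo a b, 0 < f x ∧ f x < 1 := by
    intro x hx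
    have h1C : (0:ℝ) < 1 - C := by linarith
    have htl : 1 - C < Real.exp x := by
      rw [← Real.exp_log h1C]; exact Real.exp_lt_exp.2 hx.1
    have htu : Real.exp x < 1 + C := by
      rw [← Real.exp_log (by linarith : (0:ℝ) < 1 + C)]; exact Real.exp_lt_exp.2 hx.2
    have ht0 : 0 < Real.exp x := Real.exp_pos x
    have hinv : Real.exp (-x) = (Real.exp x)⁻¹ := Real.exp_neg x
    have hti : Real.exp x * (Real.exp x)⁻¹ = 1 := mul_inv_cancel₀ (ne_of_gt ht0)
    constructor
    · have : 0 < Real.exp (-x) := Real.exp_pos _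
      simp only [hfdef]
      positivity
    · simp only [hfdef, hinv]
      have hp : 0 < (Real.exp x - (1 - C)) * ((1 + C) - Real.exp x) :=
        mul_pos (by linarith) (by linarith)
      have hip : 0 < (Real.exp x)⁻¹ := inv_pos.2 ht0
      nlinarith [mul_pos hip hp]
  choose hf0 hf1 using hfacts
  have hsq : ∀ x ∈ Set.Ioo a b, 0 < 1 - f x ^ 2 := by
    intro x hx
    nlinarith [hf0 x hx, hf1 x hx]
  -- first derivative of F
  set F' : ℝ → ℝ := fun y => -((Real.sqrt (1 - f y ^ 2))⁻¹ * fd y) with hF'def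
  have hF' : ∀ x ∈ Set.Ioo a b, HasDerivAt F (F' x) x := by
    intro x hx
    have h1 : f x ≠ -1 := by nlinarith [hf0 x hx]
    have h2 : f x ≠ 1 := ne_of_lt (hf1 x hx)
    have := (Real.hasDerivAt_arccos h1 h2).comp x (hf x)
    refine this.congr_deriv ?_
    simp [hF'def, one_div]
  -- second derivative
  have hF'' : ∀ x ∈ Set.Ioo a b,
      ∃ E : ℝ, HasDerivAt F' E x ∧ E ≤ 0 := by
    intro x hx
    have h12 := hsq x hx
    have hs : 0 < Real.sqrt (1 - f x ^ 2) := Real.sqrt_pos.2 h12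
    have hsqd : HasDerivAt (fun y => 1 - f y ^ 2) (-(2 * f x * fd x)) x := by
      simpa using ((hf x).pow 2).const_sub 1
    have hsqrt : HasDerivAt (fun y => Real.sqrt (1 - f y ^ 2))
        (1 / (2 * Real.sqrt (1 - f x ^ 2)) * (-(2 * f x * fd x))) x :=
      (Real.hasDerivAt_sqrt (ne_of_gt h12)).comp x hsqd
    have hinv := hsqrt.inv (ne_of_gt hs)
    have hE := (hinv.mul (hfd x)).neg
    refine ⟨_, hE, ?_⟩
    set s := Real.sqrt (1 - f x ^ 2)
    have hs2 : s ^ 2 = 1 - f x ^ 2 := Real.sq_sqrt (le_of_lt h12)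
    have key : -(-(1 / (2 * s) * -(2 * f x * fd x)) / s ^ 2 * fd x + s⁻¹ * f x)
        = -((f x * (s ^ 2 + fd x ^ 2)) / s ^ 3) := by
      field_simp
      ring
    show -(-(1 / (2 * s) * -(2 * f x * fd x)) / s ^ 2 * fd x + s⁻¹ * f x) ≤ 0
    rw [key]
    have : 0 ≤ (f x * (s ^ 2 + fd x ^ 2)) / s ^ 3 := by
      apply div_nonneg
      · exact mul_nonneg (le_of_lt (hf0 x hx)) (by positivity)
      · positivity
    linarith
  -- concavity of F
  have hFcont : ContinuousOn F (Set.Icc a b) := by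
    apply Continuous.continuousOn
    exact Real.continuous_arccos.comp (by continuity)
  choose E hE hE0 using hF''
  have hFconc : ConcaveOn ℝ (Set.Icc a b) F := by
    apply concaveOn_of_hasDerivWithinAt2_nonpos (f' := F')
      (f'' := fun x => if h : x ∈ Set.Ioo a b then E x h else 0)
      (convex_Icc a b) hFcont
    · intro x hx
      rw [interior_Icc] at hx
      exact (hF' x hx).hasDerivWithinAt
    · intro x hx
      rw [interior_Icc] at hx
      rw [interior_Icc]
      simpa [hx] using (hE x hx).hasDerivWithinAt (s := Set.Ioo a b)
    · intro x hx
      rw [interior_Icc] at hx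
      simp [hx, hE0 x hx]
  -- transfer to ψ
  apply hFconc.congr
  intro x hx
  obtain ⟨hcos, h0, hlt⟩ := hψ x hx
  have hpi : ψ x ≤ Real.pi := by
    have := Real.pi_pos
    linarith
  have hfx : f x = Real.cos (ψ x) := hcos.symm
  simp only [hFdef]
  rw [hfx, Real.arccos_cos h0 hpi]
end

section
/- Let P = [[a, 0],[b, 1/a]] with a ∈ ℂ \ {0}, b ∈ ℂ, and suppose F(x,y) := A y² + B y + A x² + C x ≥ 0 for all x ∈ ℝ, y ≥ 0, where A = Im(a·conj(b)), B = Re(a/conj(a)), C = Im(a/conj(a)). Then A ≥ 0, C = 0, a is real, B = 1, and consequently F(x,y) ≥ y for all x ∈ ℝ, y ≥ 0. -/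
theorem quadratic_positivity_structure
    (a b : ℂ) (ha : a ≠ 0)
    (A B C : ℝ)
    (hA : A = (a * starRingEnd ℂ b).im)
    (hB : B = (a / starRingEnd ℂ a).re)
    (hC : C = (a / starRingEnd ℂ a).im)
    (F : ℝ → ℝ → ℝ)
    (hF : ∀ x y : ℝ, F x y = A * y ^ 2 + B * y + A * x ^ 2 + C * x)
    (hpos : ∀ x y : ℝ, 0 ≤ y → 0 ≤ F x y) :
    0 ≤ A ∧ C = 0 ∧ a.im = 0 ∧ B = 1 ∧ ∀ x y : ℝ, 0 ≤ y → y ≤ F x y := by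
  have hn : 0 < a.re ^ 2 + a.im ^ 2 := by
    have := Complex.normSq_pos.mpr ha
    rw [Complex.normSq_apply] at this
    nlinarith
  have hB' : B = (a.re ^ 2 - a.im ^ 2) / (a.re ^ 2 + a.im ^ 2) := by
    rw [hB]
    simp [Complex.div_re, Complex.normSq_apply]
    ring_nf
  have hC' : C = (2 * a.re * a.im) / (a.re ^ 2 + a.im ^ 2) := by
    rw [hC]
    simp [Complex.div_im, Complex.normSq_apply]
    ring_nf
  -- A ≥ 0
  have hA0 : 0 ≤ A := by
    by_contra h
    push_neg at h
    have hAne : A ≠ 0 := ne_of_lt h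
    set y := (|B| + 1) / (-A) with hy
    have hy0 : 0 ≤ y := div_nonneg (by positivity) (by linarith)
    have hp := hpos 0 y hy0
    rw [hF] at hp
    have h2 : y * (-A) = |B| + 1 := div_mul_cancel₀ _ (by simpa using hAne)
    have hAy : A * y = -(|B| + 1) := by linear_combination -h2
    nlinarith [le_abs_self B, neg_abs_le B, abs_nonneg B,
      mul_nonneg hy0 hy0]
  -- C = 0
  have hC0 : C = 0 := by
    have h1 : 0 < (A : ℝ) + 1 := by linarith
    have hp := hpos (-C / (A + 1)) 0 le_rfl
    rw [hF] at hp
    set x0 := -C / (A + 1) with hx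
    have hCx : C = -(x0 * (A + 1)) := by
      rw [hx]; field_simp
    rw [hCx] at hp
    have hx02 : x0 ^ 2 ≤ 0 := by nlinarith
    have hsq : x0 ^ 2 = 0 := le_antisymm hx02 (sq_nonneg x0)
    have hx00 : x0 = 0 := by
      exact pow_eq_zero_iff two_ne_zero |>.mp hsq
    rw [hCx, hx00]; ring
  have hri : a.re * a.im = 0 := by
    have h0 : 2 * a.re * a.im / (a.re ^ 2 + a.im ^ 2) = 0 := by rw [← hC', hC0]
    rcases div_eq_zero_iff.mp h0 with h | h
    · linarith
    · exact absurd h (ne_of_gt hn)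
  have him : a.im = 0 := by
    rcases mul_eq_zero.mp hri with h | h
    · -- a.re = 0, then B = -1, contradiction
      exfalso
      have hB1 : B = -1 := by
        rw [hB', h]
        have : a.im ^ 2 ≠ 0 := by nlinarith
        field_simp
        ring
      have h1 : 0 < A + 1 := by linarith
      set t := 1 / (A + 1) with htdef
      have htpos : 0 < t := by positivity
      have hp := hpos 0 t htpos.le
      rw [hF, hB1] at hp
      have ht : t * (A + 1) = 1 := by rw [htdef]; field_simp
      have ht2 : A * t = 1 - t := by linear_combination ht
      have ht3 : A * t ^ 2 = (1 - t) * t := by linear_combination t * ht2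
      nlinarith [mul_pos htpos htpos]
    · exact h
  have hB1 : B = 1 := by
    rw [hB', him]
    have : a.re ^ 2 ≠ 0 := by nlinarith [sq_nonneg a.im]
    field_simp
    ring
  refine ⟨hA0, hC0, him, hB1, fun x y hy => ?_⟩
  rw [hF, hB1, hC0]
  nlinarith [mul_nonneg hA0 (sq_nonneg x), mul_nonneg hA0 (sq_nonneg y)]
end

section
/- Let m₊, m₋ be complex numbers with positive imaginary parts, T = [[a,b],[c,d]] ∈ SL(2,ℝ), and define m₋' = (a m₋ + b)/(c m₋ + d) and m₊' = (a m₊ - b)/(-c m₊ + d) (the action of ITI on m₊, where I = diag(1,-1)). Assume all denominators and m₊ + m₋, m₊' + m₋' are nonzero. Then the reflection coefficients satisfy |(conj(m₊') + m₋')/(m₊' + m₋')| = |(conj(m₊) + m₋)/(m₊ + m₋)|. -/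
theorem TM_preserves_abs_reflection
    (mp mm : ℂ) (hp : 0 < mp.im) (hm : 0 < mm.im)
    (a b c d : ℝ) (hdet : a * d - b * c = 1)
    (mp' mm' : ℂ)
    (hmm' : mm' = ((a : ℂ) * mm + b) / ((c : ℂ) * mm + d))
    (hmp' : mp' = ((a : ℂ) * mp - b) / (-(c : ℂ) * mp + d))
    (hden1 : (c : ℂ) * mm + d ≠ 0) (hden2 : -(c : ℂ) * mp + d ≠ 0)
    (hsum : mp + mm ≠ 0) (hsum' : mp' + mm' ≠ 0) :
    ‖(starRingEnd ℂ mp' + mm') / (mp' + mm')‖ =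
      ‖(starRingEnd ℂ mp + mm) / (mp + mm)‖ := by
  have hdet' : (a : ℂ) * d - b * c = 1 := by
    exact_mod_cast congrArg (Complex.ofReal) hdet
  have hden2c : -(c : ℂ) * (starRingEnd ℂ mp) + d ≠ 0 := by
    intro h
    apply hden2
    have := congrArg (starRingEnd ℂ) h
    simpa using this
  have hconj : starRingEnd ℂ mp' =
      ((a : ℂ) * (starRingEnd ℂ mp) - b) / (-(c : ℂ) * (starRingEnd ℂ mp) + d) := by
    rw [hmp']
    simp [map_div₀, map_add, map_mul, map_sub, map_neg, Complex.conj_ofReal]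
  have h1 : starRingEnd ℂ mp' + mm' =
      (starRingEnd ℂ mp + mm) /
        ((-(c : ℂ) * (starRingEnd ℂ mp) + d) * ((c : ℂ) * mm + d)) := by
    rw [hconj, hmm', div_add_div _ _ hden2c hden1]
    congr 1
    linear_combination (starRingEnd ℂ mp + mm) * hdet'
  have h2 : mp' + mm' =
      (mp + mm) / ((-(c : ℂ) * mp + d) * ((c : ℂ) * mm + d)) := by
    rw [hmp', hmm', div_add_div _ _ hden2 hden1]
    congr 1
    linear_combination (mp + mm) * hdet'
  have habs : ‖-(c : ℂ) * (starRingEnd ℂ mp) + d‖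
      = ‖-(c : ℂ) * mp + d‖ := by
    have : -(c : ℂ) * (starRingEnd ℂ mp) + d = starRingEnd ℂ (-(c : ℂ) * mp + d) := by
      simp [map_add, map_mul, map_neg, Complex.conj_ofReal]
    rw [this, Complex.norm_conj]
  rw [h1, h2]
  simp only [norm_div, norm_mul, habs]
  have hA : ‖-(c : ℂ) * mp + d‖ ≠ 0 := by simpa using hden2
  have hB : ‖(c : ℂ) * mm + d‖ ≠ 0 := by simpa using hden1
  have hS : ‖mp + mm‖ ≠ 0 := by simpa using hsum
  rw [div_div_div_comm, div_self (mul_ne_zero hA hB), div_one]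
end
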